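/- The polynomial x_2^2 x_3 + x_1 x_2 x_3 + x_1^2 x_3 + x_1^2 x_2 + x_1 x_2^2 (the Schubert polynomial of the permutation 1432) cannot be written as a product of two or more elementary symmetric polynomials e_{b_t}(x_1,...,x_{a_t}) with a_t, b_t ≥ 1, nor does it equal any single elementary symmetric polynomial e_b(x_1,...,x_a). -/
import Mathlib


open MvPolynomial

/-- The elementary symmetric polynomial `e_k(x_1, …, x_m)`, with `x_i = X (i-1)`,
in the polynomial ring `ℚ[x_1, x_2, …]`. -/
noncomputable def esym (m k : ℕ) : MvPolynomial ℕ ℚ :=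
  ∑ s ∈ Finset.powersetCard k (Finset.range m), ∏ i ∈ s, X i

/-- The Schubert polynomial of 1432 (with `x_i = X (i-1)`). -/
noncomputable def schub1432 : MvPolynomial ℕ ℚ :=
  X 1 ^ 2 * X 2 + X 0 * X 1 * X 2 + X 0 ^ 2 * X 2 + X 0 ^ 2 * X 1 + X 0 * X 1 ^ 2

/-- The evaluation point `(1,1,1,0,0,…)`. -/
noncomputable def cpt : ℕ → ℚ := fun i => if i < 3 then 1 else 0

lemma eval_esym_cpt (a b : ℕ) :
    eval cpt (esym a b) = (Nat.choose (min a 3) b : ℚ) := by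
  unfold esym
  rw [map_sum]
  have h1 : ∀ s ∈ Finset.powersetCard b (Finset.range a),
      eval cpt (∏ i ∈ s, X i) = if s ⊆ Finset.range 3 then (1:ℚ) else 0 := by
    intro s _
    rw [map_prod]
    by_cases h : s ⊆ Finset.range 3
    · rw [if_pos h]
      apply Finset.prod_eq_one
      intro i hi
      have h3 := Finset.mem_range.mp (h hi)
      simp [cpt, h3]
    · rw [if_neg h]
      obtain ⟨i, hi, hi3⟩ := Finset.not_subset.mp h
      apply Finset.prod_eq_zero hi
      have : ¬ i < 3 := by simpa [Finset.mem_range] using hi3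
      simp [cpt, this]
  rw [Finset.sum_congr rfl h1, Finset.sum_boole]
  have hfilter : (Finset.powersetCard b (Finset.range a)).filter (· ⊆ Finset.range 3)
      = Finset.powersetCard b (Finset.range (min a 3)) := by
    ext s
    simp only [Finset.mem_filter, Finset.mem_powersetCard]
    constructor
    · rintro ⟨⟨hsa, hcard⟩, hs3⟩
      refine ⟨fun i hi => ?_, hcard⟩
      have := Finset.mem_range.mp (hsa hi)
      have := Finset.mem_range.mp (hs3 hi)
      simp only [Finset.mem_range]
      omega
    · rintro ⟨hs, hcard⟩
      refine ⟨⟨fun i hi => ?_, hcard⟩, fun i hi => ?_⟩ <;>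
      · have := Finset.mem_range.mp (hs hi)
        simp only [Finset.mem_range]
        omega
  rw [hfilter, Finset.card_powersetCard, Finset.card_range]

theorem stmt_7 :
    ∀ r : ℕ, 1 ≤ r → ∀ a b : Fin r → ℕ,
      (∀ t, 1 ≤ a t) → (∀ t, 1 ≤ b t) →
      schub1432 ≠ ∏ t, esym (a t) (b t) := by
  intro r hr a b ha hb heq
  have h5 : eval cpt schub1432 = 5 := by
    simp [schub1432, cpt]
    norm_num
  have h2 : eval cpt (∏ t, esym (a t) (b t))
      = ((∏ t, Nat.choose (min (a t) 3) (b t) : ℕ) : ℚ) := by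
    rw [map_prod]
    push_cast
    exact Finset.prod_congr rfl fun t _ => eval_esym_cpt _ _
  have hcast : ((∏ t, Nat.choose (min (a t) 3) (b t) : ℕ) : ℚ) = 5 := by
    rw [← h2, ← heq, h5]
  have hnat : (∏ t, Nat.choose (min (a t) 3) (b t)) = 5 := by exact_mod_cast hcast
  have hp : Nat.Prime 5 := by norm_num
  have hdvd : (5 : ℕ) ∣ ∏ t, Nat.choose (min (a t) 3) (b t) := by rw [hnat]
  obtain ⟨t, ht, htdvd⟩ := (Nat.Prime.prime hp).exists_mem_finset_dvd hdvd
  have hdvd5 : Nat.choose (min (a t) 3) (b t) ∣ 5 :=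
    hnat ▸ Finset.dvd_prod_of_mem _ ht
  have hle : Nat.choose (min (a t) 3) (b t) ≤ 3 := by
    calc Nat.choose (min (a t) 3) (b t) ≤ Nat.choose 3 (b t) :=
          Nat.choose_le_choose _ (min_le_right _ _)
      _ ≤ 3 := by
          rcases (b t) with _|_|_|_|n
          · simp
          · simp
          · simp [Nat.choose]
          · simp [Nat.choose]
          · rw [Nat.choose_eq_zero_of_lt (by omega)]; omega
  have := Nat.dvd_antisymm hdvd5 htdvd
  omega
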